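/- Let p be a prime with p ≡ 5 (mod 8) or p ≡ 7 (mod 8), and let ε ∈ {1, −1}. Then X, Y ∈ M₂(ℤ) satisfy X² + 2Y² = εp·I if and only if one of the following holds for some integers: (i) X = [[t₁, t₂],[t₃, −t₁]] and Y = [[s₁, s₂],[s₃, −s₁]] with t₁² + t₂t₃ + 2(s₁² + s₂s₃) = εp; (ii) X = t₁I and Y = [[t₄, t₂],[t₃, −t₄]] with t₁² + 2(t₄² + t₂t₃) = εp; (iii) X = [[t₁, t₂],[t₃, −t₁]] and Y = t₄I with t₁² + t₂t₃ + 2t₄² = εp. -/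

import Mathlib

theorem aux_dvd (p : ℕ) (hp : p.Prime) (hp8 : p % 8 = 5 ∨ p % 8 = 7) (a c : ℤ)
    (h : (p:ℤ) ∣ 2*a^2 + c^2) : (p:ℤ) ∣ a ∧ (p:ℤ) ∣ c := by
  haveI : Fact p.Prime := ⟨hp⟩
  have hp2 : p ≠ 2 := by omega
  have hsq : ¬ IsSquare (-2 : ZMod p) := by
    rw [ZMod.exists_sq_eq_neg_two_iff hp2]; omega
  have h' : 2*(a : ZMod p)^2 + (c : ZMod p)^2 = 0 := by
    have := (ZMod.intCast_zmod_eq_zero_iff_dvd _ p).mpr h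
    push_cast at this
    exact this
  have ha : (a : ZMod p) = 0 := by
    by_contra ha
    apply hsq
    refine ⟨(c : ZMod p) * (a : ZMod p)⁻¹, ?_⟩
    have hinv : (a : ZMod p) * (a : ZMod p)⁻¹ = 1 := ZMod.mul_inv_of_unit _ (Ne.isUnit ha)
    field_simp
    linear_combination -h'
  have hc : (c : ZMod p) = 0 := by
    rw [ha] at h'
    have h2 : (c : ZMod p)^2 = 0 := by linear_combination h'
    exact pow_eq_zero_iff (two_ne_zero) |>.mp h2
  exact ⟨(ZMod.intCast_zmod_eq_zero_iff_dvd _ p).mp ha,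
    (ZMod.intCast_zmod_eq_zero_iff_dvd _ p).mp hc⟩

theorem no_small (a₀ c₀ : ℤ) (ha : a₀ ≠ 0) (hc : c₀ ≠ 0)
    (h : (2*a₀^2 + c₀^2) ∣ 8) : False := by
  have hqle : 2 * a₀^2 + c₀^2 ≤ 8 := Int.le_of_dvd (by norm_num) h
  have h1a : 1 ≤ a₀^2 := by
    nlinarith [Int.one_le_abs ha, sq_abs a₀, sq_nonneg (|a₀| - 1)]
  have h1c : 1 ≤ c₀^2 := by
    nlinarith [Int.one_le_abs hc, sq_abs c₀, sq_nonneg (|c₀| - 1)]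
  have hau : a₀ ≤ 1 := by nlinarith
  have hal : -1 ≤ a₀ := by nlinarith
  have hcu : c₀ ≤ 2 := by nlinarith
  have hcl : -2 ≤ c₀ := by nlinarith
  interval_cases a₀ <;> interval_cases c₀ <;>
    first
      | exact ha rfl
      | exact hc rfl
      | norm_num at h

theorem core (p : ℕ) (hp : p.Prime) (hp8 : p % 8 = 5 ∨ p % 8 = 7)
    (ε : ℤ) (hε : ε = 1 ∨ ε = -1) (x11 x12 x21 x22 y11 y12 y21 y22 : ℤ)
    (he1 : x11 * x11 + x12 * x21 + 2 * (y11 * y11 + y12 * y21) = ε * p)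
    (he2 : x11 * x12 + x12 * x22 + 2 * (y11 * y12 + y12 * y22) = 0)
    (he3 : x21 * x11 + x22 * x21 + 2 * (y21 * y11 + y22 * y21) = 0)
    (he4 : x21 * x12 + x22 * x22 + 2 * (y21 * y12 + y22 * y22) = ε * p) :
    (x22 = -x11 ∧ y22 = -y11) ∨ (x12 = 0 ∧ x21 = 0 ∧ x22 = x11 ∧ y22 = -y11) ∨
      (y12 = 0 ∧ y21 = 0 ∧ y22 = y11 ∧ x22 = -x11) := by
  have hu1 : (x11 + x22) * (x11 - x22) = -(2 * (y11 + y22) * (y11 - y22)) := by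
    linear_combination he1 - he4
  have hu2 : (x11 + x22) * (2 * x12) = -(2 * (y11 + y22) * (2 * y12)) := by
    linear_combination 2 * he2
  have hu3 : (x11 + x22) * (2 * x21) = -(2 * (y11 + y22) * (2 * y21)) := by
    linear_combination 2 * he3
  by_cases ha : x11 + x22 = 0
  · by_cases hb : y11 + y22 = 0
    · exact Or.inl ⟨by linarith, by linarith⟩
    · -- Y is scalar, X traceless : case (iii)
      have p1 : (y11 + y22) * (4 * y12) = 0 := by linear_combination hu2 - (2*x12) * ha
      have p2 : (y11 + y22) * (4 * y21) = 0 := by linear_combination hu3 - (2*x21) * ha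
      have p3 : (y11 + y22) * (2 * (y11 - y22)) = 0 := by
        linear_combination hu1 - (x11 - x22) * ha
      refine Or.inr (Or.inr ⟨?_, ?_, ?_, by linarith⟩)
      · rcases mul_eq_zero.mp p1 with h | h
        · exact absurd h hb
        · linarith
      · rcases mul_eq_zero.mp p2 with h | h
        · exact absurd h hb
        · linarith
      · rcases mul_eq_zero.mp p3 with h | h
        · exact absurd h hb
        · linarith
  · by_cases hb : y11 + y22 = 0
    · -- X is scalar, Y traceless : case (ii)
      have p1 : (x11 + x22) * (2 * x12) = 0 := by linear_combination hu2 - (4*y12) * hb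
      have p2 : (x11 + x22) * (2 * x21) = 0 := by linear_combination hu3 - (4*y21) * hb
      have p3 : (x11 + x22) * (x11 - x22) = 0 := by
        linear_combination hu1 - 2*(y11 - y22) * hb
      refine Or.inr (Or.inl ⟨?_, ?_, ?_, by linarith⟩)
      · rcases mul_eq_zero.mp p1 with h | h
        · exact absurd h ha
        · linarith
      · rcases mul_eq_zero.mp p2 with h | h
        · exact absurd h ha
        · linarith
      · rcases mul_eq_zero.mp p3 with h | h
        · exact absurd h ha
        · linarith
    · -- contradiction case
      exfalso
      have h2b : (2 : ℤ) * (y11 + y22) ≠ 0 := fun h => hb (by linarith)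
      have hgpos : 0 < Int.gcd (x11 + x22) (2*(y11 + y22)) :=
        Int.gcd_pos_of_ne_zero_left _ ha
      set g : ℤ := (Int.gcd (x11 + x22) (2*(y11 + y22)) : ℤ) with hgdef
      have hg0 : g ≠ 0 := by positivity
      obtain ⟨a₀, ha₀⟩ : g ∣ (x11 + x22) := Int.gcd_dvd_left _ _
      obtain ⟨c₀, hc₀⟩ : g ∣ 2*(y11 + y22) := Int.gcd_dvd_right _ _
      have ha₀ne : a₀ ≠ 0 := by rintro rfl; simp at ha₀; exact ha ha₀
      have hc₀ne : c₀ ≠ 0 := by rintro rfl; simp at hc₀; exact h2b (by linarith)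
      have hcop : IsCoprime a₀ c₀ := by
        rw [Int.isCoprime_iff_gcd_eq_one]
        have hthis := Int.gcd_div_gcd_div_gcd hgpos
        rw [← hgdef] at hthis
        have hdiva : (x11 + x22) / g = a₀ := by
          rw [ha₀]; exact Int.mul_ediv_cancel_left _ hg0
        have hdivc : (2*(y11 + y22)) / g = c₀ := by
          rw [hc₀]; exact Int.mul_ediv_cancel_left _ hg0
        rwa [hdiva, hdivc] at hthis
      have l1 : a₀ * (x11 - x22) = -(c₀ * (y11 - y22)) := by
        have k : g * (a₀ * (x11 - x22) + c₀ * (y11 - y22)) = 0 := by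
          linear_combination hu1 - (x11 - x22) * ha₀ - (y11 - y22) * hc₀
        rcases mul_eq_zero.mp k with h | h
        · exact absurd h hg0
        · linarith
      have l2 : a₀ * (2 * x12) = -(c₀ * (2 * y12)) := by
        have k : g * (a₀ * (2 * x12) + c₀ * (2 * y12)) = 0 := by
          linear_combination hu2 - (2 * x12) * ha₀ - (2 * y12) * hc₀
        rcases mul_eq_zero.mp k with h | h
        · exact absurd h hg0
        · linarith
      have l3 : a₀ * (2 * x21) = -(c₀ * (2 * y21)) := by
        have k : g * (a₀ * (2 * x21) + c₀ * (2 * y21)) = 0 := by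
          linear_combination hu3 - (2 * x21) * ha₀ - (2 * y21) * hc₀
        rcases mul_eq_zero.mp k with h | h
        · exact absurd h hg0
        · linarith
      obtain ⟨w₁, hw1⟩ : a₀ ∣ (y11 - y22) :=
        hcop.dvd_of_dvd_mul_left ⟨-(x11 - x22), by linear_combination l1⟩
      obtain ⟨w₂, hw2⟩ : a₀ ∣ (2 * y12) :=
        hcop.dvd_of_dvd_mul_left ⟨-(2 * x12), by linear_combination l2⟩
      obtain ⟨w₃, hw3⟩ : a₀ ∣ (2 * y21) :=
        hcop.dvd_of_dvd_mul_left ⟨-(2 * x21), by linear_combination l3⟩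
      have m1 : x11 - x22 = -(c₀ * w₁) := by
        have k : a₀ * ((x11 - x22) + c₀ * w₁) = 0 := by
          linear_combination l1 - c₀ * hw1
        rcases mul_eq_zero.mp k with h | h
        · exact absurd h ha₀ne
        · linarith
      have m2 : 2 * x12 = -(c₀ * w₂) := by
        have k : a₀ * ((2 * x12) + c₀ * w₂) = 0 := by
          linear_combination l2 - c₀ * hw2
        rcases mul_eq_zero.mp k with h | h
        · exact absurd h ha₀ne
        · linarith
      have m3 : 2 * x21 = -(c₀ * w₃) := by
        have k : a₀ * ((2 * x21) + c₀ * w₃) = 0 := by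
          linear_combination l3 - c₀ * hw3
        rcases mul_eq_zero.mp k with h | h
        · exact absurd h ha₀ne
        · linarith
      have key : (2 * a₀^2 + c₀^2) * (g^2 + 2 * (w₁^2 + w₂ * w₃)) = 8 * (ε * p) := by
        linear_combination 4*he1 + 4*he4 - 2*(g*a₀ + x11 + x22)*ha₀
          - (g*c₀ + 2*(y11 + y22))*hc₀ + 2*(c₀*w₁ - (x11 - x22))*m1
          - 4*(a₀*w₁ + (y11 - y22))*hw1 + 2*c₀*w₃*m2 - 4*x12*m3
          - 4*a₀*w₃*hw2 - 8*y12*hw3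
      have hq8p : (2 * a₀^2 + c₀^2) ∣ 8 * (p:ℤ) := by
        have h1 : (2 * a₀^2 + c₀^2) ∣ 8 * (ε * p) := ⟨_, key.symm⟩
        rcases hε with rfl | rfl
        · simpa using h1
        · have heq : (8:ℤ) * (-1 * p) = -(8 * p) := by ring
          rw [heq] at h1
          exact (dvd_neg).mp h1
      have hnd : ¬ (p:ℤ) ∣ (2 * a₀^2 + c₀^2) := by
        intro hd
        obtain ⟨hpa, hpc⟩ := aux_dvd p hp hp8 a₀ c₀ hd
        have hu : IsUnit (p:ℤ) := hcop.isUnit_of_dvd' hpa hpc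
        rw [Int.isUnit_iff] at hu
        have := hp.two_le
        omega
      have hpZ : Prime (p:ℤ) := by
        rw [Int.prime_iff_natAbs_prime]; simpa using hp
      have hco : IsCoprime (2 * a₀^2 + c₀^2) (p:ℤ) :=
        ((hpZ.coprime_iff_not_dvd).mpr hnd).symm
      have hq8 : (2 * a₀^2 + c₀^2) ∣ 8 := hco.dvd_of_dvd_mul_right hq8p
      exact no_small a₀ c₀ ha₀ne hc₀ne hq8

theorem stmt_14 (p : ℕ) (hp : p.Prime) (hp8 : p % 8 = 5 ∨ p % 8 = 7)
    (ε : ℤ) (hε : ε = 1 ∨ ε = -1) (X Y : Matrix (Fin 2) (Fin 2) ℤ) :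
    X ^ 2 + (2 : ℤ) • Y ^ 2 = (ε * p) • (1 : Matrix (Fin 2) (Fin 2) ℤ) ↔
    ((∃ t₁ t₂ t₃ s₁ s₂ s₃ : ℤ, X = !![t₁, t₂; t₃, -t₁] ∧ Y = !![s₁, s₂; s₃, -s₁] ∧
        t₁ ^ 2 + t₂ * t₃ + 2 * (s₁ ^ 2 + s₂ * s₃) = ε * p) ∨
     (∃ t₁ t₂ t₃ t₄ : ℤ, X = t₁ • (1 : Matrix (Fin 2) (Fin 2) ℤ) ∧
        Y = !![t₄, t₂; t₃, -t₄] ∧ t₁ ^ 2 + 2 * (t₄ ^ 2 + t₂ * t₃) = ε * p) ∨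
     (∃ t₁ t₂ t₃ t₄ : ℤ, X = !![t₁, t₂; t₃, -t₁] ∧
        Y = t₄ • (1 : Matrix (Fin 2) (Fin 2) ℤ) ∧ t₁ ^ 2 + t₂ * t₃ + 2 * t₄ ^ 2 = ε * p)) := by
  constructor
  · intro h
    have h00 := congrFun (congrFun h 0) 0
    have h01 := congrFun (congrFun h 0) 1
    have h10 := congrFun (congrFun h 1) 0
    have h11 := congrFun (congrFun h 1) 1
    simp only [pow_two, Matrix.add_apply, Matrix.smul_apply, Matrix.mul_apply, Fin.sum_univ_two,
      Matrix.one_apply, smul_eq_mul] at h00 h01 h10 h11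
    norm_num at h00 h01 h10 h11
    rcases core p hp hp8 ε hε (X 0 0) (X 0 1) (X 1 0) (X 1 1) (Y 0 0) (Y 0 1) (Y 1 0) (Y 1 1)
        h00 h01 h10 h11 with
      ⟨hx, hy⟩ | ⟨hx12, hx21, hx22, hy22⟩ | ⟨hy12, hy21, hy22, hx22⟩
    · refine Or.inl ⟨X 0 0, X 0 1, X 1 0, Y 0 0, Y 0 1, Y 1 0,
        (Matrix.eta_fin_two X).trans (by rw [hx]),
        (Matrix.eta_fin_two Y).trans (by rw [hy]), by linear_combination h00⟩
    · refine Or.inr (Or.inl ⟨X 0 0, Y 0 1, Y 1 0, Y 0 0,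
        (Matrix.eta_fin_two X).trans ?_,
        (Matrix.eta_fin_two Y).trans (by rw [hy22]),
        by linear_combination h00 - X 1 0 * hx12⟩)
      rw [hx12, hx21, hx22]
      ext i j
      fin_cases i <;> fin_cases j <;> simp [Matrix.one_apply]
    · refine Or.inr (Or.inr ⟨X 0 0, X 0 1, X 1 0, Y 0 0,
        (Matrix.eta_fin_two X).trans (by rw [hx22]),
        (Matrix.eta_fin_two Y).trans ?_,
        by linear_combination h00 - 2 * Y 1 0 * hy12⟩)
      rw [hy12, hy21, hy22]
      ext i j
      fin_cases i <;> fin_cases j <;> simp [Matrix.one_apply]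
  · rintro (⟨t1, t2, t3, s1, s2, s3, rfl, rfl, ht⟩ | ⟨t1, t2, t3, t4, rfl, rfl, ht⟩ |
      ⟨t1, t2, t3, t4, rfl, rfl, ht⟩) <;>
    · ext i j
      fin_cases i <;> fin_cases j <;>
        simp only [pow_two, Matrix.add_apply, Matrix.smul_apply, Matrix.mul_apply,
          Fin.sum_univ_two, Matrix.one_apply, smul_eq_mul, Matrix.cons_val', Matrix.cons_val_zero,
          Matrix.cons_val_one, Matrix.head_cons, Matrix.head_fin_const, Matrix.empty_val',
          Matrix.cons_val_fin_one] <;>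
        norm_num <;> first | linear_combination ht | linear_combination -ht | linarith [ht]
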